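/- arXiv:2311.04117 — 2 statements merged into one kernel-verified Lean document; each statement's English description precedes it below -/
import Mathlib

section
/- Let (Ω, F, μ) be a σ-finite measure space, H a separable real Hilbert space, and for each ω ∈ Ω let A_ω : H → 2^H be maximally monotone such that for every x ∈ L²(Ω, μ; H) the map ω ↦ J_{A_ω}(x(ω)) is measurable, and such that the operator A on L²(Ω, μ; H) defined by x* ∈ Ax iff x*(ω) ∈ A_ω(x(ω)) a.e. has nonempty domain. Then A is maximally monotone on L²(Ω, μ; H), and for every γ > 0 its resolvent acts fiberwise: (J_{γA} x)(ω) = J_{γ A_ω}(x(ω)) for μ-a.e. ω and every x ∈ L²(Ω, μ; H). -/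
open MeasureTheory RealInnerProductSpace

/-- A set-valued operator is monotone. -/
def MonotoneOp {H : Type*} [NormedAddCommGroup H] [InnerProductSpace ℝ H]
    (A : H → Set H) : Prop :=
  ∀ x y x' y' : H, x' ∈ A x → y' ∈ A y → 0 ≤ ⟪x - y, x' - y'⟫

/-- A set-valued operator is maximally monotone. -/
def MaximallyMonotoneOp {H : Type*} [NormedAddCommGroup H] [InnerProductSpace ℝ H]
    (A : H → Set H) : Prop :=
  MonotoneOp A ∧ ∀ x x' : H, (∀ y y' : H, y' ∈ A y → 0 ≤ ⟪x - y, x' - y'⟫) → x' ∈ A x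

/-- The (`γ`-scaled) resolvent of a monotone operator is nonexpansive. -/
lemma mono_nonexp {H : Type*} [NormedAddCommGroup H] [InnerProductSpace ℝ H]
    {A : H → Set H} (hA : MonotoneOp A) {γ : ℝ} (hγ : 0 < γ)
    {u v p q : H} (hp : γ⁻¹ • (u - p) ∈ A p) (hq : γ⁻¹ • (v - q) ∈ A q) :
    ‖p - q‖ ≤ ‖u - v‖ := by
  have h := hA p q _ _ hp hq
  rw [← smul_sub, real_inner_smul_right] at h
  have hinv : (0:ℝ) < γ⁻¹ := inv_pos.2 hγ
  have h2 : (0:ℝ) ≤ ⟪p - q, (u - p) - (v - q)⟫ := nonneg_of_mul_nonneg_right h hinv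
  have h3 : (u - p) - (v - q) = (u - v) - (p - q) := by abel
  rw [h3, inner_sub_right] at h2
  have h4 : ⟪p - q, p - q⟫ ≤ ⟪p - q, u - v⟫ := by linarith
  have h5 := real_inner_le_norm (p - q) (u - v)
  rw [real_inner_self_eq_norm_mul_norm] at h4
  by_contra hcon
  push_neg at hcon
  nlinarith [norm_nonneg (u - v), norm_nonneg (p - q)]

theorem direct_integral_maximally_monotone
    {Ω H : Type*} [MeasurableSpace Ω] {μ : Measure Ω} [SigmaFinite μ]
    [NormedAddCommGroup H] [InnerProductSpace ℝ H] [CompleteSpace H]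
    [SecondCountableTopology H]
    (A : Ω → H → Set H) (hA : ∀ ω, MaximallyMonotoneOp (A ω))
    -- `J ω` is the resolvent of `A ω`
    (J : Ω → H → H) (hJ : ∀ ω, ∀ u : H, u - J ω u ∈ A ω (J ω u))
    (hJmeas : ∀ x : Ω → H, MemLp x 2 μ →
      AEStronglyMeasurable (fun ω => J ω (x ω)) μ)
    (hdom : ∃ x x' : Ω → H, MemLp x 2 μ ∧ MemLp x' 2 μ ∧
      ∀ᵐ ω ∂μ, x' ω ∈ A ω (x ω)) :
    -- `A` is maximally monotone on `L²(Ω, μ; H)`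
    (∀ x y x' y' : Ω → H, MemLp x 2 μ → MemLp y 2 μ → MemLp x' 2 μ → MemLp y' 2 μ →
      (∀ᵐ ω ∂μ, x' ω ∈ A ω (x ω)) → (∀ᵐ ω ∂μ, y' ω ∈ A ω (y ω)) →
        0 ≤ ∫ ω, ⟪x ω - y ω, x' ω - y' ω⟫ ∂μ) ∧
    (∀ x x' : Ω → H, MemLp x 2 μ → MemLp x' 2 μ →
      (∀ y y' : Ω → H, MemLp y 2 μ → MemLp y' 2 μ →
        (∀ᵐ ω ∂μ, y' ω ∈ A ω (y ω)) →
          0 ≤ ∫ ω, ⟪x ω - y ω, x' ω - y' ω⟫ ∂μ) →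
        ∀ᵐ ω ∂μ, x' ω ∈ A ω (x ω)) ∧
    -- for every `γ > 0` the resolvent of `A` acts fiberwise
    ∀ γ : ℝ, 0 < γ → ∀ x : Ω → H, MemLp x 2 μ →
      (∃ p : Ω → H, MemLp p 2 μ ∧ ∀ᵐ ω ∂μ, γ⁻¹ • (x ω - p ω) ∈ A ω (p ω)) ∧
      ∀ p q : Ω → H, MemLp p 2 μ → MemLp q 2 μ →
        (∀ᵐ ω ∂μ, γ⁻¹ • (x ω - p ω) ∈ A ω (p ω)) →
        (∀ᵐ ω ∂μ, γ⁻¹ • (x ω - q ω) ∈ A ω (q ω)) →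
          p =ᵐ[μ] q := by
  obtain ⟨x₀, x₀', hx₀, hx₀', hdom'⟩ := hdom
  -- the pointwise resolvent maps L² into L²
  have hres1 : ∀ x : Ω → H, MemLp x 2 μ → MemLp (fun ω => J ω (x ω)) 2 μ := by
    intro x hx
    have hb : MemLp (fun ω => ‖x ω - x₀ ω - x₀' ω‖ + ‖x₀ ω‖) 2 μ :=
      ((hx.sub hx₀).sub hx₀').norm.add hx₀.norm
    refine MemLp.of_le hb (hJmeas x hx) ?_
    filter_upwards [hdom'] with ω hω
    have hp : (1:ℝ)⁻¹ • (x ω - J ω (x ω)) ∈ A ω (J ω (x ω)) := by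
      simpa using hJ ω (x ω)
    have hq : (1:ℝ)⁻¹ • ((x₀ ω + x₀' ω) - x₀ ω) ∈ A ω (x₀ ω) := by
      simpa using hω
    have h1 : ‖J ω (x ω) - x₀ ω‖ ≤ ‖x ω - (x₀ ω + x₀' ω)‖ :=
      mono_nonexp (hA ω).1 one_pos hp hq
    have h2 : ‖J ω (x ω)‖ ≤ ‖J ω (x ω) - x₀ ω‖ + ‖x₀ ω‖ := by
      calc ‖J ω (x ω)‖ = ‖(J ω (x ω) - x₀ ω) + x₀ ω‖ := by rw [sub_add_cancel]
        _ ≤ ‖J ω (x ω) - x₀ ω‖ + ‖x₀ ω‖ := norm_add_le _ _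
    have h3 : x ω - (x₀ ω + x₀' ω) = x ω - x₀ ω - x₀' ω := by abel
    rw [Real.norm_eq_abs]
    refine le_trans ?_ (le_abs_self _)
    rw [h3] at h1
    linarith
  -- key: existence of the resolvent of γ A in L², for all γ > 0
  have key : ∀ γ : ℝ, 0 < γ → ∀ x : Ω → H, MemLp x 2 μ →
      ∃ p : Ω → H, MemLp p 2 μ ∧ ∀ᵐ ω ∂μ, γ⁻¹ • (x ω - p ω) ∈ A ω (p ω) := by
    have step : ∀ γ γ' : ℝ, 0 < γ → 0 < γ' → γ < 2 * γ' →
        (∀ x : Ω → H, MemLp x 2 μ →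
          ∃ p, MemLp p 2 μ ∧ ∀ᵐ ω ∂μ, γ⁻¹ • (x ω - p ω) ∈ A ω (p ω)) →
        (∀ x : Ω → H, MemLp x 2 μ →
          ∃ p, MemLp p 2 μ ∧ ∀ᵐ ω ∂μ, γ'⁻¹ • (x ω - p ω) ∈ A ω (p ω)) := by
      intro γ γ' hγ hγ' hlt hres x hx
      set c : ℝ := γ / γ' with hc
      set d : ℝ := 1 - c with hd
      have hc0 : 0 < c := div_pos hγ hγ'
      have hc2 : c < 2 := by rw [hc, div_lt_iff₀ hγ']; linarith
      have hdlt : |d| < 1 := by rw [abs_lt]; constructor <;> [linarith; linarith]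
      set xL : Lp H 2 μ := hx.toLp x with hxL
      have pick : ∀ g : Lp H 2 μ, ∃ p, MemLp p 2 μ ∧
          ∀ᵐ ω ∂μ, γ⁻¹ • ((c • xL + d • g : Lp H 2 μ) ω - p ω) ∈ A ω (p ω) :=
        fun g => hres _ (Lp.memLp _)
      choose pf hpf1 hpf2 using pick
      set Φ : Lp H 2 μ → Lp H 2 μ := fun g => (hpf1 g).toLp (pf g) with hΦ
      have hnonexp : ∀ f g : Lp H 2 μ,
          eLpNorm (pf f - pf g) 2 μ ≤ eLpNorm (d • (⇑f - ⇑g)) 2 μ := by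
        intro f g
        apply eLpNorm_mono_ae
        filter_upwards [hpf2 f, hpf2 g, Lp.coeFn_add (c • xL) (d • f),
          Lp.coeFn_add (c • xL) (d • g), Lp.coeFn_smul d f, Lp.coeFn_smul d g,
          Lp.coeFn_smul c xL] with ω h1 h2 e1 e2 e3 e4 e5
        have hle : ‖pf f ω - pf g ω‖ ≤
            ‖(c • xL + d • f : Lp H 2 μ) ω - (c • xL + d • g : Lp H 2 μ) ω‖ :=
          mono_nonexp (hA ω).1 hγ h1 h2
        have heq : (c • xL + d • f : Lp H 2 μ) ω - (c • xL + d • g : Lp H 2 μ) ω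
            = d • (f ω - g ω) := by
          rw [e1, e2, Pi.add_apply, Pi.add_apply, e3, e4, e5]
          simp only [Pi.smul_apply]
          rw [smul_sub]
          abel
        rw [heq] at hle
        simpa using hle
      have hlip : LipschitzWith ‖d‖₊ Φ := by
        intro f g
        have e1 : edist (Φ f) (Φ g) = eLpNorm (pf f - pf g) 2 μ :=
          Lp.edist_toLp_toLp _ _ (hpf1 f) (hpf1 g)
        have e2 : edist f g = eLpNorm (⇑f - ⇑g) 2 μ := Lp.edist_def f g
        rw [e1, e2]
        calc eLpNorm (pf f - pf g) 2 μ ≤ eLpNorm (d • (⇑f - ⇑g)) 2 μ := hnonexp f g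
          _ ≤ ‖d‖₊ • eLpNorm (⇑f - ⇑g) 2 μ := eLpNorm_const_smul_le
          _ = (‖d‖₊ : ENNReal) * eLpNorm (⇑f - ⇑g) 2 μ := by rw [ENNReal.smul_def]; rfl
      have hK1 : ‖d‖₊ < 1 := by
        rw [← Real.norm_eq_abs] at hdlt
        exact_mod_cast (by rwa [coe_nnnorm] : (‖d‖₊ : ℝ) < 1)
      have hcontr : ContractingWith ‖d‖₊ Φ := ⟨hK1, hlip⟩
      obtain ⟨g, hg, -⟩ := hcontr.exists_fixedPoint xL (edist_ne_top _ _)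
      have hgfix : pf g =ᵐ[μ] ⇑g := by
        have h1 : ⇑(Φ g) =ᵐ[μ] pf g := MemLp.coeFn_toLp (hpf1 g)
        have h2 : Φ g = g := hg
        rw [h2] at h1
        exact h1.symm
      refine ⟨⇑g, Lp.memLp g, ?_⟩
      have hscal : γ⁻¹ * c = γ'⁻¹ := by
        rw [hc]; field_simp
      filter_upwards [hpf2 g, hgfix, Lp.coeFn_add (c • xL) (d • g),
        Lp.coeFn_smul d g, Lp.coeFn_smul c xL,
        MemLp.coeFn_toLp hx] with ω h1 hfix eadd esmul1 esmul2 ex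
      rw [hfix] at h1
      have heq : (c • xL + d • g : Lp H 2 μ) ω - g ω = c • (x ω - g ω) := by
        have ex' : (xL : Ω → H) ω = x ω := ex
        rw [eadd, Pi.add_apply, esmul1, esmul2]
        simp only [Pi.smul_apply]
        rw [ex', hd, smul_sub, sub_smul, one_smul]
        abel
      rw [heq, smul_smul, hscal] at h1
      exact h1
    have base : ∀ x : Ω → H, MemLp x 2 μ →
        ∃ p, MemLp p 2 μ ∧ ∀ᵐ ω ∂μ, (1:ℝ)⁻¹ • (x ω - p ω) ∈ A ω (p ω) := by
      intro x hx
      exact ⟨_, hres1 x hx, Filter.Eventually.of_forall fun ω => by simpa using hJ ω (x ω)⟩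
    have small : ∀ n : ℕ, ∀ x : Ω → H, MemLp x 2 μ →
        ∃ p, MemLp p 2 μ ∧ ∀ᵐ ω ∂μ, (((2:ℝ)/3) ^ n)⁻¹ • (x ω - p ω) ∈ A ω (p ω) := by
      intro n
      induction n with
      | zero => simpa using base
      | succ n ih =>
        refine step (((2:ℝ)/3) ^ n) (((2:ℝ)/3) ^ (n + 1))
          (pow_pos (by norm_num) _) (pow_pos (by norm_num) _) ?_ ih
        have hpos : (0:ℝ) < ((2:ℝ)/3) ^ n := pow_pos (by norm_num) _
        rw [pow_succ]
        nlinarith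
    intro γ hγ x hx
    obtain ⟨n, hn⟩ := exists_pow_lt_of_lt_one (by linarith : (0:ℝ) < 2 * γ)
      (by norm_num : (2:ℝ)/3 < 1)
    exact step (((2:ℝ)/3) ^ n) γ (pow_pos (by norm_num) _) hγ hn (small n) x hx
  refine ⟨?_, ?_, ?_⟩
  · -- monotonicity
    intro x y x' y' hx hy hx' hy' h1 h2
    apply integral_nonneg_of_ae
    filter_upwards [h1, h2] with ω hxo hyo
    exact (hA ω).1 _ _ _ _ hxo hyo
  · -- maximality
    intro x x' hx hx' h
    obtain ⟨p, hp, hsol⟩ := key 1 one_pos (fun ω => x ω + x' ω) (hx.add hx')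
    have hsol' : ∀ᵐ ω ∂μ, x ω + x' ω - p ω ∈ A ω (p ω) := by
      filter_upwards [hsol] with ω h; simpa using h
    have hy' : MemLp (fun ω => x ω + x' ω - p ω) 2 μ := (hx.add hx').sub hp
    have hint := h p (fun ω => x ω + x' ω - p ω) hp hy' hsol'
    have heq : ∀ ω, ⟪x ω - p ω, x' ω - (x ω + x' ω - p ω)⟫ = -‖x ω - p ω‖ ^ 2 := by
      intro ω
      have h4 : x' ω - (x ω + x' ω - p ω) = -(x ω - p ω) := by abel
      rw [h4, inner_neg_right, real_inner_self_eq_norm_sq]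
    simp only [heq] at hint
    rw [integral_neg] at hint
    have hInt : Integrable (fun ω => ‖x ω - p ω‖ ^ 2) μ :=
      (memLp_two_iff_integrable_sq_norm (hx.sub hp).1).1 (hx.sub hp)
    have h0 : ∫ ω, ‖x ω - p ω‖ ^ 2 ∂μ = 0 :=
      le_antisymm (by linarith) (integral_nonneg fun ω => sq_nonneg _)
    have hae := (integral_eq_zero_iff_of_nonneg_ae
      (Filter.Eventually.of_forall fun ω => sq_nonneg _) hInt).1 h0
    filter_upwards [hae, hsol'] with ω h1 h2
    have hxp : x ω = p ω := by
      have h5 : ‖x ω - p ω‖ ^ 2 = 0 := h1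
      have h6 : ‖x ω - p ω‖ = 0 := by
        nlinarith [norm_nonneg (x ω - p ω)]
      rwa [norm_sub_eq_zero_iff] at h6
    rw [← hxp] at h2
    simpa using h2
  · -- fiberwise resolvent
    intro γ hγ x hx
    refine ⟨key γ hγ x hx, ?_⟩
    intro p q hp hq hsp hsq
    have h : ∀ᵐ ω ∂μ, ‖p ω - q ω‖ ≤ ‖x ω - x ω‖ := by
      filter_upwards [hsp, hsq] with ω h1 h2
      exact mono_nonexp (hA ω).1 hγ h1 h2
    filter_upwards [h] with ω h1
    rw [sub_self, norm_zero] at h1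
    have := le_antisymm h1 (norm_nonneg _)
    rwa [norm_sub_eq_zero_iff] at this
end

section
/- Let (Ω, F, μ) be a σ-finite measure space, H a separable real Hilbert space, and for each ω let A_ω : H → 2^H be maximally monotone. Define A on L²(Ω, μ; H) by x* ∈ Ax iff x*(ω) ∈ A_ω(x(ω)) a.e., and assume dom A ≠ ∅. If A is maximally monotone, then for every fixed u ∈ H the map ω ↦ J_{A_ω}(u) is measurable from Ω to H. -/
open MeasureTheory RealInnerProductSpace

section Minty

variable {E : Type*} [NormedAddCommGroup E] [InnerProductSpace ℝ E] [CompleteSpace E]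

private noncomputable def mL (g z : E × E) : ℝ := ⟪z.1, g.2⟫ + ⟪g.1, z.2⟫ - ⟪g.1, g.2⟫

private noncomputable def mT (g z : E × E) : ℝ := mL g z + (⟪z.1, z.1⟫ + ⟪z.2, z.2⟫) / 2

omit [CompleteSpace E] in
private lemma mL_expand (g z : E × E) :
    ⟪z.1 - g.1, z.2 - g.2⟫ = ⟪z.1, z.2⟫ - mL g z := by
  simp only [mL, inner_sub_left, inner_sub_right]; ring

omit [CompleteSpace E] in
private lemma minty_sup_ge {G : Set (E × E)}
    (hmax : ∀ p : E × E, (∀ q ∈ G, 0 ≤ ⟪p.1 - q.1, p.2 - q.2⟫) → p ∈ G)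
    (z : E × E) : ∃ g ∈ G, ⟪z.1, z.2⟫ ≤ mL g z := by
  by_contra h
  push_neg at h
  have hz : z ∈ G := by
    refine hmax z fun q hq => ?_
    have h1 := h q hq
    rw [mL_expand]; linarith
  have h2 := h z hz
  have : mL z z = ⟪z.1, z.2⟫ := by simp [mL]
  rw [this] at h2
  exact lt_irrefl _ h2

private lemma minty_zero (G : Set (E × E)) (hne : G.Nonempty)
    (hmono : ∀ p ∈ G, ∀ q ∈ G, 0 ≤ ⟪p.1 - q.1, p.2 - q.2⟫)
    (hmax : ∀ p : E × E, (∀ q ∈ G, 0 ≤ ⟪p.1 - q.1, p.2 - q.2⟫) → p ∈ G) :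
    ∃ x : E, (x, -x) ∈ G := by
  classical
  set R : Set ℝ := {r | ∃ z : E × E, ∀ g ∈ G, mT g z ≤ r} with hR
  obtain ⟨g₀, hg₀⟩ := hne
  have hRne : R.Nonempty := by
    refine ⟨⟪g₀.1, g₀.2⟫ + (⟪g₀.1, g₀.1⟫ + ⟪g₀.2, g₀.2⟫) / 2, g₀, fun g hg => ?_⟩
    have h1 := hmono g₀ hg₀ g hg
    rw [mL_expand] at h1
    simp only [mT]; linarith
  have hRlow : ∀ r ∈ R, 0 ≤ r := by
    rintro r ⟨z, hz⟩
    obtain ⟨g, hgG, hg⟩ := minty_sup_ge hmax z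
    have h1 := hz g hgG
    have h2 : ⟪z.1 + z.2, z.1 + z.2⟫ = ⟪z.1, z.1⟫ + ⟪z.2, z.2⟫ + 2 * ⟪z.1, z.2⟫ := by
      simp only [inner_add_left, inner_add_right]
      rw [real_inner_comm z.2 z.1]; ring
    have h3 : (0:ℝ) ≤ ⟪z.1 + z.2, z.1 + z.2⟫ := real_inner_self_nonneg
    simp only [mT] at h1
    linarith
  have hRbdd : BddBelow R := ⟨0, fun r hr => hRlow r hr⟩
  set m : ℝ := sInf R with hm
  have hseq : ∀ n : ℕ, ∃ z : E × E, ∀ g ∈ G, mT g z ≤ m + 1 / (n + 1) := by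
    intro n
    have hlt : m < m + 1 / (n + 1) := by
      have : (0:ℝ) < 1 / (n + 1) := by positivity
      linarith
    obtain ⟨r, hrR, hrlt⟩ := exists_lt_of_csInf_lt hRne hlt
    obtain ⟨z, hz⟩ := hrR
    exact ⟨z, fun g hg => (hz g hg).trans hrlt.le⟩
  choose z hz using hseq
  have hconv : ∀ (g w w' : E × E),
      mT g ((1/2 : ℝ) • (w + w')) = mT g w / 2 + mT g w' / 2
        - (⟪w.1 - w'.1, w.1 - w'.1⟫ + ⟪w.2 - w'.2, w.2 - w'.2⟫) / 8 := by
    intro g w w'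
    simp only [mT, mL, Prod.smul_fst, Prod.smul_snd, Prod.fst_add, Prod.snd_add,
      inner_add_left, inner_add_right, inner_sub_left, inner_sub_right,
      real_inner_smul_left, real_inner_smul_right]
    rw [real_inner_comm w'.1 w.1, real_inner_comm w'.2 w.2]
    ring
  have hdist : ∀ n k : ℕ, ⟪(z n).1 - (z k).1, (z n).1 - (z k).1⟫
      + ⟪(z n).2 - (z k).2, (z n).2 - (z k).2⟫ ≤ 4 * (1 / (n + 1) + 1 / (k + 1)) := by
    intro n k
    have hmid : (m + 1/(n+1)) / 2 + (m + 1/(k+1)) / 2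
        - (⟪(z n).1 - (z k).1, (z n).1 - (z k).1⟫
          + ⟪(z n).2 - (z k).2, (z n).2 - (z k).2⟫) / 8 ∈ R := by
      refine ⟨(1/2 : ℝ) • (z n + z k), fun g hg => ?_⟩
      rw [hconv g (z n) (z k)]
      have h1 := hz n g hg
      have h2 := hz k g hg
      linarith
    have := csInf_le hRbdd hmid
    rw [← hm] at this
    linarith
  have hcauchy : ∀ (f : ℕ → E),
      (∀ n k : ℕ, ⟪f n - f k, f n - f k⟫ ≤ 4 * (1 / (n + 1) + 1 / (k + 1))) →
      CauchySeq f := by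
    intro f hf
    refine cauchySeq_of_le_tendsto_0 (fun N => Real.sqrt (8 / (N + 1))) (fun n k N hn hk => ?_) ?_
    · rw [dist_eq_norm]
      rw [← Real.sqrt_sq (norm_nonneg (f n - f k))]
      refine Real.sqrt_le_sqrt ?_
      have h1 := hf n k
      rw [real_inner_self_eq_norm_sq] at h1
      have h2 : (1:ℝ) / (n + 1) ≤ 1 / (N + 1) := by
        apply one_div_le_one_div_of_le (by positivity)
        have := (Nat.cast_le (α := ℝ)).2 hn
        linarith
      have h3 : (1:ℝ) / (k + 1) ≤ 1 / (N + 1) := by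
        apply one_div_le_one_div_of_le (by positivity)
        have := (Nat.cast_le (α := ℝ)).2 hk
        linarith
      have h4 : (4:ℝ) * (1 / (n + 1) + 1 / (k + 1)) ≤ 8 / (N + 1) := by
        rw [div_eq_mul_one_div 8]
        linarith
      linarith
    · have h0 : Filter.Tendsto (fun N : ℕ => 8 / ((N:ℝ) + 1)) Filter.atTop (nhds 0) :=
        Filter.Tendsto.div_atTop tendsto_const_nhds
          (Filter.tendsto_atTop_add_const_right _ 1 tendsto_natCast_atTop_atTop)
      have := (Real.continuous_sqrt.tendsto 0).comp h0
      rw [Real.sqrt_zero] at this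
      exact this
  obtain ⟨a, ha⟩ := cauchySeq_tendsto_of_complete
    (hcauchy (fun n => (z n).1) (fun n k => by
      have h1 := hdist n k
      have h2 : (0:ℝ) ≤ ⟪(z n).2 - (z k).2, (z n).2 - (z k).2⟫ := real_inner_self_nonneg
      linarith))
  obtain ⟨b, hb⟩ := cauchySeq_tendsto_of_complete
    (hcauchy (fun n => (z n).2) (fun n k => by
      have h1 := hdist n k
      have h2 : (0:ℝ) ≤ ⟪(z n).1 - (z k).1, (z n).1 - (z k).1⟫ := real_inner_self_nonneg
      linarith))
  have hab : ∀ g ∈ G, mT g (a, b) ≤ m := by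
    intro g hg
    have hT : Filter.Tendsto (fun n => mT g (z n)) Filter.atTop (nhds (mT g (a, b))) := by
      simp only [mT, mL]
      exact (((ha.inner tendsto_const_nhds).add
        (tendsto_const_nhds.inner hb)).sub tendsto_const_nhds).add
        (((ha.inner ha).add (hb.inner hb)).div_const 2)
    have hM : Filter.Tendsto (fun n : ℕ => m + 1 / ((n:ℝ) + 1)) Filter.atTop (nhds m) := by
      have h0 : Filter.Tendsto (fun n : ℕ => 1 / ((n:ℝ) + 1)) Filter.atTop (nhds 0) :=
        Filter.Tendsto.div_atTop tendsto_const_nhds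
          (Filter.tendsto_atTop_add_const_right _ 1 tendsto_natCast_atTop_atTop)
      simpa using tendsto_const_nhds.add h0
    exact le_of_tendsto_of_tendsto' hT hM (fun n => hz n g hg)
  set c : ℝ := m - (⟪a, a⟫ + ⟪b, b⟫) / 2 with hc
  have habL : ∀ g ∈ G, mL g (a, b) ≤ c := by
    intro g hg
    have h' : mL g (a, b) + (⟪a, a⟫ + ⟪b, b⟫) / 2 ≤ m := hab g hg
    rw [hc]; linarith
  have hcab : ⟪a, b⟫ ≤ c := by
    obtain ⟨g, hgG, hg⟩ := minty_sup_ge hmax (a, b)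
    have h' : ⟪a, b⟫ ≤ mL g (a, b) := hg
    exact h'.trans (habL g hgG)
  have hmc : m = c + (⟪a, a⟫ + ⟪b, b⟫) / 2 := by rw [hc]; ring
  -- subgradient inequality at graph points
  have hsub : ∀ g ∈ G, c - ⟪a, g.1 - a⟫ - ⟪b, g.2 - b⟫ ≤ ⟪g.1, g.2⟫ := by
    intro g hg
    have key : ∀ t : ℝ, 0 < t → t ≤ 1 →
        0 ≤ (⟪g.1, g.2⟫ - c + ⟪a, g.1 - a⟫ + ⟪b, g.2 - b⟫)
          + t / 2 * (⟪g.1 - a, g.1 - a⟫ + ⟪g.2 - b, g.2 - b⟫) := by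
      intro t ht0 ht1
      have hwR : (1 - t) * c + t * ⟪g.1, g.2⟫
          + (⟪a + t • (g.1 - a), a + t • (g.1 - a)⟫
            + ⟪b + t • (g.2 - b), b + t • (g.2 - b)⟫) / 2 ∈ R := by
        refine ⟨(a + t • (g.1 - a), b + t • (g.2 - b)), fun h hhG => ?_⟩
        have h1 : mL h (a, b) ≤ c := habL h hhG
        have h2 : mL h g ≤ ⟪g.1, g.2⟫ := by
          have h3 := hmono g hg h hhG
          rw [mL_expand] at h3; linarith
        have hTdef : mT h (a + t • (g.1 - a), b + t • (g.2 - b))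
            = mL h (a + t • (g.1 - a), b + t • (g.2 - b))
              + (⟪a + t • (g.1 - a), a + t • (g.1 - a)⟫
                + ⟪b + t • (g.2 - b), b + t • (g.2 - b)⟫) / 2 := rfl
        have haff : mL h (a + t • (g.1 - a), b + t • (g.2 - b))
            = (1 - t) * mL h (a, b) + t * mL h g := by
          simp only [mL, inner_add_left, inner_add_right,
            real_inner_smul_left, real_inner_smul_right, inner_sub_left, inner_sub_right]
          ring
        rw [hTdef, haff]
        have e1 : (1 - t) * mL h (a, b) ≤ (1 - t) * c :=
          mul_le_mul_of_nonneg_left h1 (by linarith)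
        have e2 : t * mL h g ≤ t * ⟪g.1, g.2⟫ :=
          mul_le_mul_of_nonneg_left h2 ht0.le
        exact add_le_add (add_le_add e1 e2) le_rfl
      have hmle := csInf_le hRbdd hwR
      rw [← hm] at hmle
      have hw1 : ⟪a + t • (g.1 - a), a + t • (g.1 - a)⟫
          = ⟪a, a⟫ + 2 * t * ⟪a, g.1 - a⟫ + t^2 * ⟪g.1 - a, g.1 - a⟫ := by
        simp only [inner_add_left, inner_add_right, real_inner_smul_left, real_inner_smul_right]
        rw [real_inner_comm (g.1 - a) a]
        ring
      have hw2 : ⟪b + t • (g.2 - b), b + t • (g.2 - b)⟫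
          = ⟪b, b⟫ + 2 * t * ⟪b, g.2 - b⟫ + t^2 * ⟪g.2 - b, g.2 - b⟫ := by
        simp only [inner_add_left, inner_add_right, real_inner_smul_left, real_inner_smul_right]
        rw [real_inner_comm (g.2 - b) b]
        ring
      rw [hw1, hw2, hmc] at hmle
      have h1 : 0 ≤ t * ((⟪g.1, g.2⟫ - c + ⟪a, g.1 - a⟫ + ⟪b, g.2 - b⟫)
          + t / 2 * (⟪g.1 - a, g.1 - a⟫ + ⟪g.2 - b, g.2 - b⟫)) := by
        nlinarith [hmle]
      have h2 : t * 0 ≤ t * ((⟪g.1, g.2⟫ - c + ⟪a, g.1 - a⟫ + ⟪b, g.2 - b⟫)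
          + t / 2 * (⟪g.1 - a, g.1 - a⟫ + ⟪g.2 - b, g.2 - b⟫)) := by
        rw [mul_zero]; exact h1
      exact le_of_mul_le_mul_left h2 ht0
    have h0 : Filter.Tendsto (fun n : ℕ => 1 / ((n:ℝ) + 1)) Filter.atTop (nhds 0) :=
      Filter.Tendsto.div_atTop tendsto_const_nhds
        (Filter.tendsto_atTop_add_const_right _ 1 tendsto_natCast_atTop_atTop)
    have hlim : Filter.Tendsto (fun n : ℕ =>
        (⟪g.1, g.2⟫ - c + ⟪a, g.1 - a⟫ + ⟪b, g.2 - b⟫)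
          + (1 / ((n:ℝ) + 1)) / 2 * (⟪g.1 - a, g.1 - a⟫ + ⟪g.2 - b, g.2 - b⟫))
        Filter.atTop (nhds (⟪g.1, g.2⟫ - c + ⟪a, g.1 - a⟫ + ⟪b, g.2 - b⟫)) := by
      have := ((h0.div_const 2).mul_const
        (⟪g.1 - a, g.1 - a⟫ + ⟪g.2 - b, g.2 - b⟫)).const_add
        (⟪g.1, g.2⟫ - c + ⟪a, g.1 - a⟫ + ⟪b, g.2 - b⟫)
      simpa using this
    have hK0 : 0 ≤ ⟪g.1, g.2⟫ - c + ⟪a, g.1 - a⟫ + ⟪b, g.2 - b⟫ := by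
      refine ge_of_tendsto' hlim fun n => ?_
      refine key (1 / ((n:ℝ) + 1)) (by positivity) ?_
      rw [div_le_one (by positivity)]
      have := (Nat.cast_nonneg (α := ℝ) n)
      linarith
    linarith
  -- the candidate (-b, -a) belongs to G
  have hcand : ((-b, -a) : E × E) ∈ G := by
    refine hmax (-b, -a) fun g hg => ?_
    have h1 := hsub g hg
    have e : ⟪(-b : E) - g.1, (-a : E) - g.2⟫
        = ⟪b, a⟫ + ⟪b, g.2⟫ + ⟪g.1, a⟫ + ⟪g.1, g.2⟫ := by
      simp only [inner_sub_left, inner_sub_right, inner_neg_left, inner_neg_right]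
      ring
    have e2 : ⟪a, g.1 - a⟫ = ⟪a, g.1⟫ - ⟪a, a⟫ := by rw [inner_sub_right]
    have e3 : ⟪b, g.2 - b⟫ = ⟪b, g.2⟫ - ⟪b, b⟫ := by rw [inner_sub_right]
    have e4 : ⟪g.1, a⟫ = ⟪a, g.1⟫ := real_inner_comm _ _
    have e5 : ⟪b, a⟫ = ⟪a, b⟫ := real_inner_comm _ _
    have hsq : ⟪a + b, a + b⟫ = ⟪a, a⟫ + ⟪b, b⟫ + 2 * ⟪a, b⟫ := by
      simp only [inner_add_left, inner_add_right]
      rw [real_inner_comm b a]; ring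
    have h5 : (0:ℝ) ≤ ⟪a + b, a + b⟫ := real_inner_self_nonneg
    have h6 : (((-b, -a) : E × E)).1 - g.1 = -b - g.1 := rfl
    rw [e2, e3] at h1
    show (0:ℝ) ≤ ⟪(-b : E) - g.1, (-a : E) - g.2⟫
    rw [e]
    linarith
  -- conclude b = -a
  have h1 := hsub (-b, -a) hcand
  have e1 : ⟪a, ((-b, -a) : E × E).1 - a⟫ = -⟪a, b⟫ - ⟪a, a⟫ := by
    show ⟪a, -b - a⟫ = _
    rw [inner_sub_right, inner_neg_right]
  have e2 : ⟪b, ((-b, -a) : E × E).2 - b⟫ = -⟪a, b⟫ - ⟪b, b⟫ := by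
    show ⟪b, -a - b⟫ = _
    rw [inner_sub_right, inner_neg_right, real_inner_comm b a]
  have e3 : ⟪((-b, -a) : E × E).1, ((-b, -a) : E × E).2⟫ = ⟪a, b⟫ := by
    show ⟪(-b : E), (-a : E)⟫ = _
    rw [inner_neg_neg, real_inner_comm]
  rw [e1, e2, e3] at h1
  have hsq : ⟪a + b, a + b⟫ = ⟪a, a⟫ + ⟪b, b⟫ + 2 * ⟪a, b⟫ := by
    simp only [inner_add_left, inner_add_right]
    rw [real_inner_comm b a]; ring
  have h5 : (0:ℝ) ≤ ⟪a + b, a + b⟫ := real_inner_self_nonneg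
  have h6 : ⟪a + b, a + b⟫ = 0 := by linarith
  have h7 : a + b = 0 := by rwa [inner_self_eq_zero] at h6
  have hba : b = -a := by
    have := eq_neg_of_add_eq_zero_right h7
    exact this
  refine ⟨-b, ?_⟩
  rw [show -(-b) = -a from by rw [neg_neg]; exact hba]
  exact hcand

/-- Minty's theorem: a maximally monotone operator on a real Hilbert space is such that
`I + A` is surjective. -/
lemma minty_surjective' (G : Set (E × E)) (hne : G.Nonempty)
    (hmono : ∀ p ∈ G, ∀ q ∈ G, 0 ≤ ⟪p.1 - q.1, p.2 - q.2⟫)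
    (hmax : ∀ p : E × E, (∀ q ∈ G, 0 ≤ ⟪p.1 - q.1, p.2 - q.2⟫) → p ∈ G)
    (f : E) : ∃ x x' : E, (x, x') ∈ G ∧ x + x' = f := by
  set G₂ : Set (E × E) := {p | (p.1, p.2 + f) ∈ G} with hG₂
  have hne₂ : G₂.Nonempty := by
    obtain ⟨g₀, hg₀⟩ := hne
    exact ⟨(g₀.1, g₀.2 - f), by simp only [hG₂, Set.mem_setOf_eq, sub_add_cancel]; exact hg₀⟩
  have hmono₂ : ∀ p ∈ G₂, ∀ q ∈ G₂, 0 ≤ ⟪p.1 - q.1, p.2 - q.2⟫ := by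
    intro p hp q hq
    have := hmono (p.1, p.2 + f) hp (q.1, q.2 + f) hq
    simpa using this
  have hmax₂ : ∀ p : E × E, (∀ q ∈ G₂, 0 ≤ ⟪p.1 - q.1, p.2 - q.2⟫) → p ∈ G₂ := by
    intro p hp
    have : (p.1, p.2 + f) ∈ G := by
      refine hmax _ fun q hq => ?_
      have hq₂ : ((q.1, q.2 - f) : E × E) ∈ G₂ := by
        simp only [hG₂, Set.mem_setOf_eq, sub_add_cancel]; exact hq
      have := hp _ hq₂
      simp only at this ⊢
      have e : p.2 - (q.2 - f) = p.2 + f - q.2 := by abel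
      rwa [e] at this
    exact this
  obtain ⟨x, hx⟩ := minty_zero G₂ hne₂ hmono₂ hmax₂
  exact ⟨x, -x + f, hx, by abel⟩

end Minty


theorem resolvent_field_measurable_of_maximally_monotone
    {Ω H : Type*} [MeasurableSpace Ω] {μ : Measure Ω} [SigmaFinite μ]
    [NormedAddCommGroup H] [InnerProductSpace ℝ H] [CompleteSpace H]
    [SecondCountableTopology H]
    (A : Ω → H → Set H) (hA : ∀ ω, MaximallyMonotoneOp (A ω))
    -- `J ω` is the resolvent of `A ω`
    (J : Ω → H → H) (hJ : ∀ ω, ∀ u : H, u - J ω u ∈ A ω (J ω u))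
    (hdom : ∃ x x' : Ω → H, MemLp x 2 μ ∧ MemLp x' 2 μ ∧
      ∀ᵐ ω ∂μ, x' ω ∈ A ω (x ω))
    -- `A` is maximally monotone on `L²(Ω, μ; H)`
    (hmax : ∀ x x' : Ω → H, MemLp x 2 μ → MemLp x' 2 μ →
      (∀ y y' : Ω → H, MemLp y 2 μ → MemLp y' 2 μ →
        (∀ᵐ ω ∂μ, y' ω ∈ A ω (y ω)) →
          0 ≤ ∫ ω, ⟪x ω - y ω, x' ω - y' ω⟫ ∂μ) →
        ∀ᵐ ω ∂μ, x' ω ∈ A ω (x ω)) :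
    ∀ u : H, AEStronglyMeasurable (fun ω => J ω u) μ := by
  intro u
  -- the graph of `A` as a subset of `L² × L²`
  set G : Set (Lp H 2 μ × Lp H 2 μ) := {p | ∀ᵐ ω ∂μ, p.2 ω ∈ A ω (p.1 ω)} with hG
  obtain ⟨x₀, x₀', hx₀, hx₀', hgr₀⟩ := hdom
  have hne : G.Nonempty := by
    refine ⟨(hx₀.toLp x₀, hx₀'.toLp x₀'), ?_⟩
    show ∀ᵐ ω ∂μ, (hx₀'.toLp x₀') ω ∈ A ω ((hx₀.toLp x₀) ω)
    filter_upwards [hx₀.coeFn_toLp, hx₀'.coeFn_toLp, hgr₀] with ω h1 h2 h3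
    rw [h1, h2]; exact h3
  have hinner : ∀ p q : Lp H 2 μ × Lp H 2 μ,
      ⟪p.1 - q.1, p.2 - q.2⟫ = ∫ ω, ⟪p.1 ω - q.1 ω, p.2 ω - q.2 ω⟫ ∂μ := by
    intro p q
    rw [L2.inner_def]
    refine integral_congr_ae ?_
    filter_upwards [Lp.coeFn_sub p.1 q.1, Lp.coeFn_sub p.2 q.2] with ω h1 h2
    rw [h1, h2]; rfl
  have hmono : ∀ p ∈ G, ∀ q ∈ G, 0 ≤ ⟪p.1 - q.1, p.2 - q.2⟫ := by
    intro p hp q hq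
    rw [hinner]
    refine integral_nonneg_of_ae ?_
    filter_upwards [hp, hq] with ω h1 h2
    exact (hA ω).1 _ _ _ _ h1 h2
  have hmaxG : ∀ p : Lp H 2 μ × Lp H 2 μ,
      (∀ q ∈ G, 0 ≤ ⟪p.1 - q.1, p.2 - q.2⟫) → p ∈ G := by
    intro p hp
    show ∀ᵐ ω ∂μ, p.2 ω ∈ A ω (p.1 ω)
    refine hmax p.1 p.2 (Lp.memLp p.1) (Lp.memLp p.2) ?_
    intro y y' hy hy' hgr
    have hq : ((hy.toLp y, hy'.toLp y') : Lp H 2 μ × Lp H 2 μ) ∈ G := by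
      show ∀ᵐ ω ∂μ, (hy'.toLp y') ω ∈ A ω ((hy.toLp y) ω)
      filter_upwards [hy.coeFn_toLp, hy'.coeFn_toLp, hgr] with ω h1 h2 h3
      rw [h1, h2]; exact h3
    have h0 := hp _ hq
    rw [hinner] at h0
    refine le_of_le_of_eq h0 (integral_congr_ae ?_)
    filter_upwards [hy.coeFn_toLp, hy'.coeFn_toLp] with ω h1 h2
    rw [h1, h2]
  -- for each spanning set, solve the resolvent equation in `L²`
  have key : ∀ n : ℕ, ∃ g : Ω → H, AEStronglyMeasurable g μ ∧
      ∀ᵐ ω ∂μ, ω ∈ spanningSets μ n → g ω = J ω u := by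
    intro n
    have hsn : MeasurableSet (spanningSets μ n) := measurableSet_spanningSets μ n
    have hfn : MemLp ((spanningSets μ n).indicator (fun _ => u)) 2 μ :=
      memLp_indicator_const 2 hsn u (Or.inr (measure_spanningSets_lt_top μ n).ne)
    obtain ⟨X, X', hXG, hsum⟩ := minty_surjective' G hne hmono hmaxG (hfn.toLp _)
    refine ⟨⇑X, Lp.aestronglyMeasurable X, ?_⟩
    have hXX' : ∀ᵐ ω ∂μ, X' ω ∈ A ω (X ω) := hXG
    have hadd : ∀ᵐ ω ∂μ, X ω + X' ω = (spanningSets μ n).indicator (fun _ => u) ω := by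
      have h1 : ⇑(X + X') =ᵐ[μ] fun ω => X ω + X' ω := Lp.coeFn_add X X'
      rw [hsum] at h1
      filter_upwards [h1, hfn.coeFn_toLp] with ω e1 e2
      rw [← e1, e2]
    filter_upwards [hXX', hadd] with ω h1 h2 hmem
    have hvu : (spanningSets μ n).indicator (fun _ => u) ω = u :=
      Set.indicator_of_mem hmem _
    rw [hvu] at h2
    have h3 : u - X ω ∈ A ω (X ω) := by
      have e : u - X ω = X' ω := by rw [← h2]; abel
      rw [e]; exact h1
    have h5 := (hA ω).1 (X ω) (J ω u) (u - X ω) (u - J ω u) h3 (hJ ω u)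
    have e : (u - X ω) - (u - J ω u) = -(X ω - J ω u) := by abel
    rw [e, inner_neg_right] at h5
    have h6 : ⟪X ω - J ω u, X ω - J ω u⟫ = 0 :=
      le_antisymm (by linarith) real_inner_self_nonneg
    have h7 : X ω - J ω u = 0 := by rwa [inner_self_eq_zero] at h6
    exact sub_eq_zero.mp h7
  choose g hgmeas hgae using key
  have hind : ∀ n, AEStronglyMeasurable ((spanningSets μ n).indicator (fun ω => J ω u)) μ := by
    intro n
    have hcongr : (spanningSets μ n).indicator (fun ω => J ω u)
        =ᵐ[μ] (spanningSets μ n).indicator (g n) := by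
      filter_upwards [hgae n] with ω h
      by_cases hm : ω ∈ spanningSets μ n
      · rw [Set.indicator_of_mem hm, Set.indicator_of_mem hm, h hm]
      · rw [Set.indicator_of_notMem hm, Set.indicator_of_notMem hm]
    exact ((hgmeas n).indicator (measurableSet_spanningSets μ n)).congr hcongr.symm
  refine aestronglyMeasurable_of_tendsto_ae Filter.atTop hind ?_
  refine Filter.Eventually.of_forall fun ω => ?_
  obtain ⟨N, hN⟩ : ∃ N, ω ∈ spanningSets μ N := by
    have hx : ω ∈ ⋃ i, spanningSets μ i := by
      rw [iUnion_spanningSets]; trivial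
    exact Set.mem_iUnion.mp hx
  refine Filter.Tendsto.congr' ?_ (tendsto_const_nhds (x := J ω u))
  filter_upwards [Filter.eventually_ge_atTop N] with n hn
  exact (Set.indicator_of_mem (monotone_spanningSets μ hn hN) (fun ω => J ω u)).symm
end
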